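/- Li_3(2) = (7/8)ζ(3) + (π²/4)log 2 − (π/2) i (log 2)², interpreted via the analytic continuation of Li_3 with the branch obtained by approaching 2 from the upper half plane; equivalently, the real identity Li_3(1/2) = (7/8)ζ(3) − (π²/12)log 2 + (1/6)(log 2)³ holds, where Li_3(1/2) = Σ_{k≥1} 2^{-k}/k³. -/

import Mathlib

open Real Set Filter Topology

noncomputable def L2 (x : ℝ) : ℝ := ∑' n : ℕ, x ^ (n + 1) / ((n : ℝ) + 1) ^ 2
noncomputable def L3 (x : ℝ) : ℝ := ∑' n : ℕ, x ^ (n + 1) / ((n : ℝ) + 1) ^ 3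

lemma summable_invsq : Summable (fun n : ℕ => 1 / ((n : ℝ) + 1) ^ 2) := by
  have := hasSum_zeta_two.summable
  have h := (summable_nat_add_iff 1).2 this
  simpa using h

lemma summable_invcube : Summable (fun n : ℕ => 1 / ((n : ℝ) + 1) ^ 3) := by
  refine Summable.of_nonneg_of_le (fun n => ?_) (fun n => ?_) summable_invsq
  · positivity
  have h0 : (0:ℝ) ≤ (n:ℝ) := Nat.cast_nonneg n
  have h1 : (1:ℝ) ≤ (n:ℝ) + 1 := by linarith
  exact one_div_le_one_div_of_le (pow_pos (by linarith : (0:ℝ) < (n:ℝ)+1) 2) (pow_le_pow_right₀ h1 (by norm_num))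

lemma bound_pow {x : ℝ} (hx : |x| ≤ 1) (n : ℕ) (p : ℕ) (hp : 1 ≤ p) :
    ‖x ^ (n + 1) / ((n : ℝ) + 1) ^ p‖ ≤ 1 / ((n : ℝ) + 1) ^ p := by
  rw [norm_div, norm_pow, Real.norm_eq_abs, Real.norm_eq_abs,
    abs_of_pos (by positivity : (0:ℝ) < ((n:ℝ)+1)^p)]
  gcongr
  exact pow_le_one₀ (abs_nonneg x) hx

lemma summable_L2 {x : ℝ} (hx : |x| ≤ 1) :
    Summable (fun n : ℕ => x ^ (n + 1) / ((n : ℝ) + 1) ^ 2) :=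
  Summable.of_norm_bounded summable_invsq (fun n => bound_pow hx n 2 one_le_two)

lemma summable_L3 {x : ℝ} (hx : |x| ≤ 1) :
    Summable (fun n : ℕ => x ^ (n + 1) / ((n : ℝ) + 1) ^ 3) :=
  Summable.of_norm_bounded summable_invcube (fun n => bound_pow hx n 3 (by norm_num))

lemma contL2 : ContinuousOn L2 (Icc (-1 : ℝ) 1) := by
  refine continuousOn_tsum (fun i => (continuous_pow _).continuousOn.div_const _)
    summable_invsq (fun n x hx => ?_)
  exact bound_pow (abs_le.2 ⟨hx.1, hx.2⟩) n 2 one_le_two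

lemma contL3 : ContinuousOn L3 (Icc (-1 : ℝ) 1) := by
  refine continuousOn_tsum (fun i => (continuous_pow _).continuousOn.div_const _)
    summable_invcube (fun n x hx => ?_)
  exact bound_pow (abs_le.2 ⟨hx.1, hx.2⟩) n 3 (by norm_num)

lemma L2_zero : L2 0 = 0 := by simp [L2]
lemma L3_zero : L3 0 = 0 := by simp [L3]

lemma L2_one : L2 1 = π ^ 2 / 6 := by
  have h := (hasSum_nat_add_iff' 1).2 hasSum_zeta_two
  simp only [Finset.range_one, Finset.sum_singleton, Nat.cast_zero] at h
  norm_num at h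
  unfold L2
  rw [← h.tsum_eq]
  congr 1; funext n; push_cast; simp


lemma hasDerivAt_L2 {x : ℝ} (hx : |x| < 1) :
    HasDerivAt L2 (∑' n : ℕ, x ^ n / ((n : ℝ) + 1)) x := by
  set r : ℝ := (1 + |x|) / 2 with hr
  have hax : 0 ≤ |x| := abs_nonneg x
  have hr0 : 0 < r := by rw [hr]; positivity
  have hr1 : r < 1 := by rw [hr]; linarith
  have hxr : |x| < r := by rw [hr]; linarith
  have hu : Summable (fun n : ℕ => r ^ n) := summable_geometric_of_lt_one hr0.le hr1
  have hderiv : ∀ (n : ℕ), ∀ y ∈ Ioo (-r) r,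
      HasDerivAt (fun z : ℝ => z ^ (n + 1) / ((n : ℝ) + 1) ^ 2) (y ^ n / ((n : ℝ) + 1)) y := by
    intro n y _
    have h := (hasDerivAt_pow (n + 1) y).div_const (((n : ℝ) + 1) ^ 2)
    refine h.congr_deriv (Eq.symm ?_)
    have hn : ((n : ℝ) + 1) ≠ 0 := by positivity
    push_cast
    field_simp
  have hbound : ∀ (n : ℕ), ∀ y ∈ Ioo (-r) r, ‖y ^ n / ((n : ℝ) + 1)‖ ≤ r ^ n := by
    intro n y hy
    have hyr : |y| ≤ r := le_of_lt (abs_lt.2 ⟨hy.1, hy.2⟩)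
    rw [norm_div, norm_pow, Real.norm_eq_abs, Real.norm_eq_abs,
      abs_of_pos (by positivity : (0:ℝ) < (n : ℝ) + 1)]
    calc |y| ^ n / ((n : ℝ) + 1) ≤ |y| ^ n :=
          div_le_self (pow_nonneg (abs_nonneg y) n) (by linarith [(Nat.cast_nonneg n : (0:ℝ) ≤ (n:ℝ))])
      _ ≤ r ^ n := pow_le_pow_left₀ (abs_nonneg y) hyr n
  have hsum0 : Summable (fun n : ℕ => (0:ℝ) ^ (n + 1) / ((n : ℝ) + 1) ^ 2) := by
    apply summable_L2; simp
  have h0mem : (0:ℝ) ∈ Ioo (-r) r := by constructor <;> [linarith; exact hr0]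
  have hxmem : x ∈ Ioo (-r) r := abs_lt.1 hxr
  exact hasDerivAt_tsum_of_isPreconnected hu isOpen_Ioo (convex_Ioo (-r) r).isPreconnected
    hderiv hbound h0mem hsum0 hxmem

lemma hasDerivAt_L3 {x : ℝ} (hx : |x| < 1) :
    HasDerivAt L3 (∑' n : ℕ, x ^ n / ((n : ℝ) + 1) ^ 2) x := by
  set r : ℝ := (1 + |x|) / 2 with hr
  have hax : 0 ≤ |x| := abs_nonneg x
  have hr0 : 0 < r := by rw [hr]; positivity
  have hr1 : r < 1 := by rw [hr]; linarith
  have hxr : |x| < r := by rw [hr]; linarith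
  have hu : Summable (fun n : ℕ => r ^ n) := summable_geometric_of_lt_one hr0.le hr1
  have hderiv : ∀ (n : ℕ), ∀ y ∈ Ioo (-r) r,
      HasDerivAt (fun z : ℝ => z ^ (n + 1) / ((n : ℝ) + 1) ^ 3) (y ^ n / ((n : ℝ) + 1) ^ 2) y := by
    intro n y _
    have h := (hasDerivAt_pow (n + 1) y).div_const (((n : ℝ) + 1) ^ 3)
    refine h.congr_deriv (Eq.symm ?_)
    have hn : ((n : ℝ) + 1) ≠ 0 := by positivity
    push_cast
    field_simp
  have hbound : ∀ (n : ℕ), ∀ y ∈ Ioo (-r) r, ‖y ^ n / ((n : ℝ) + 1) ^ 2‖ ≤ r ^ n := by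
    intro n y hy
    have hyr : |y| ≤ r := le_of_lt (abs_lt.2 ⟨hy.1, hy.2⟩)
    have h1 : (1:ℝ) ≤ ((n : ℝ) + 1) ^ 2 := by
      have : (0:ℝ) ≤ (n:ℝ) := Nat.cast_nonneg n
      nlinarith
    rw [norm_div, norm_pow, Real.norm_eq_abs, Real.norm_eq_abs,
      abs_of_pos (by positivity : (0:ℝ) < ((n : ℝ) + 1) ^ 2)]
    calc |y| ^ n / ((n : ℝ) + 1) ^ 2 ≤ |y| ^ n :=
          div_le_self (pow_nonneg (abs_nonneg y) n) h1
      _ ≤ r ^ n := pow_le_pow_left₀ (abs_nonneg y) hyr n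
  have hsum0 : Summable (fun n : ℕ => (0:ℝ) ^ (n + 1) / ((n : ℝ) + 1) ^ 3) := by
    apply summable_L3; simp
  have h0mem : (0:ℝ) ∈ Ioo (-r) r := by constructor <;> [linarith; exact hr0]
  have hxmem : x ∈ Ioo (-r) r := abs_lt.1 hxr
  exact hasDerivAt_tsum_of_isPreconnected hu isOpen_Ioo (convex_Ioo (-r) r).isPreconnected
    hderiv hbound h0mem hsum0 hxmem

lemma hasDerivAt_L2' {x : ℝ} (hx : |x| < 1) (hx0 : x ≠ 0) :
    HasDerivAt L2 (-Real.log (1 - x) / x) x := by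
  have h := hasDerivAt_L2 hx
  have key : (∑' n : ℕ, x ^ n / ((n : ℝ) + 1)) = -Real.log (1 - x) / x := by
    have hs := (hasSum_pow_div_log_of_abs_lt_one hx).div_const x
    rw [← hs.tsum_eq]
    congr 1; funext n
    rw [pow_succ]
    field_simp
  rwa [key] at h

lemma hasDerivAt_L3' {x : ℝ} (hx : |x| < 1) (hx0 : x ≠ 0) :
    HasDerivAt L3 (L2 x / x) x := by
  have h := hasDerivAt_L3 hx
  have key : (∑' n : ℕ, x ^ n / ((n : ℝ) + 1) ^ 2) = L2 x / x := by
    have hs := (summable_L2 hx.le).hasSum.div_const x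
    rw [L2, ← hs.tsum_eq]
    congr 1; funext n
    rw [pow_succ]
    field_simp
    ring
  rwa [key] at h


lemma const_on_Ioo {f : ℝ → ℝ} {a b : ℝ} (hf : ∀ x ∈ Ioo a b, HasDerivAt f 0 x)
    {x y : ℝ} (hx : x ∈ Ioo a b) (hy : y ∈ Ioo a b) : f x = f y := by
  wlog h : x ≤ y generalizing x y
  · exact (this hy hx (le_of_not_ge h)).symm
  have hsub : Icc x y ⊆ Ioo a b := fun z hz =>
    ⟨lt_of_lt_of_le hx.1 hz.1, lt_of_le_of_lt hz.2 hy.2⟩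
  have hcont : ContinuousOn f (Icc x y) := fun z hz =>
    ((hf z (hsub hz)).continuousAt).continuousWithinAt
  have hd : ∀ z ∈ Ico x y, HasDerivWithinAt f 0 (Ici z) z := fun z hz =>
    (hf z (hsub ⟨hz.1, hz.2.le⟩)).hasDerivWithinAt
  exact (constant_of_has_deriv_right_zero hcont hd y (right_mem_Icc.2 h)).symm

lemma tendsto_L2 {l : Filter ℝ} {g : ℝ → ℝ} {c : ℝ} (hc : c ∈ Icc (-1:ℝ) 1)
    (hg : Tendsto g l (𝓝 c)) (hmem : ∀ᶠ x in l, g x ∈ Icc (-1:ℝ) 1) :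
    Tendsto (fun x => L2 (g x)) l (𝓝 (L2 c)) :=
  (contL2 c hc).tendsto.comp (tendsto_nhdsWithin_iff.2 ⟨hg, hmem⟩)

lemma tendsto_L3 {l : Filter ℝ} {g : ℝ → ℝ} {c : ℝ} (hc : c ∈ Icc (-1:ℝ) 1)
    (hg : Tendsto g l (𝓝 c)) (hmem : ∀ᶠ x in l, g x ∈ Icc (-1:ℝ) 1) :
    Tendsto (fun x => L3 (g x)) l (𝓝 (L3 c)) :=
  (contL3 c hc).tendsto.comp (tendsto_nhdsWithin_iff.2 ⟨hg, hmem⟩)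

lemma Ioo_mem_left : Ioo (0:ℝ) 1 ∈ 𝓝[<] (1:ℝ) :=
  Ioo_mem_nhdsLT_of_mem ⟨by norm_num, le_refl 1⟩

lemma Ioo_half_mem_left : Ioo (1/2:ℝ) 1 ∈ 𝓝[<] (1:ℝ) :=
  Ioo_mem_nhdsLT_of_mem ⟨by norm_num, le_refl 1⟩

lemma tendsto_loglog :
    Tendsto (fun x : ℝ => Real.log x * Real.log (1 - x)) (𝓝[<] (1:ℝ)) (𝓝 0) := by
  have h1 : Tendsto (fun x : ℝ => 1 - x) (𝓝[<] (1:ℝ)) (𝓝[>] (0:ℝ)) := by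
    apply tendsto_nhdsWithin_of_tendsto_nhds_of_eventually_within
    · have : Tendsto (fun x : ℝ => 1 - x) (𝓝 (1:ℝ)) (𝓝 (0:ℝ)) := by
        have := ((continuous_sub_left (1:ℝ)).tendsto 1)
        simpa using this
      exact this.mono_left nhdsWithin_le_nhds
    · filter_upwards [self_mem_nhdsWithin] with x hx
      simpa [sub_pos] using hx
  have h2 := (tendsto_log_mul_rpow_nhdsGT_zero one_pos).comp h1
  simp only [Function.comp_def, rpow_one] at h2
  have h3 : Tendsto (fun x : ℝ => 2 * ‖Real.log (1 - x) * (1 - x)‖) (𝓝[<] (1:ℝ)) (𝓝 0) := by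
    have := (h2.norm.const_mul 2)
    simpa using this
  apply squeeze_zero_norm' ?_ h3
  filter_upwards [Ioo_half_mem_left] with x hx
  obtain ⟨hx1, hx2⟩ := hx
  have hx0 : (0:ℝ) < x := by linarith
  have hlogx : |Real.log x| ≤ 2 * (1 - x) := by
    rw [abs_of_nonpos (Real.log_nonpos hx0.le hx2.le)]
    have hil := Real.log_le_sub_one_of_pos (inv_pos.2 hx0)
    rw [Real.log_inv] at hil
    have h2x : x⁻¹ ≤ 2 := by
      rw [inv_eq_one_div, div_le_iff₀ hx0]; linarith
    have heq : x⁻¹ - 1 = (1 - x) * x⁻¹ := by field_simp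
    have : (1 - x) * x⁻¹ ≤ (1 - x) * 2 :=
      mul_le_mul_of_nonneg_left h2x (by linarith)
    linarith [heq ▸ hil]
  calc ‖Real.log x * Real.log (1 - x)‖ = |Real.log x| * |Real.log (1 - x)| := by
        rw [Real.norm_eq_abs, abs_mul]
    _ ≤ 2 * (1 - x) * |Real.log (1 - x)| :=
        mul_le_mul_of_nonneg_right hlogx (abs_nonneg _)
    _ = 2 * ‖Real.log (1 - x) * (1 - x)‖ := by
        rw [Real.norm_eq_abs, abs_mul, abs_of_nonneg (by linarith : (0:ℝ) ≤ 1 - x)]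
        ring

lemma euler {x : ℝ} (hx : x ∈ Ioo (0:ℝ) 1) :
    L2 x + L2 (1 - x) + Real.log x * Real.log (1 - x) = π ^ 2 / 6 := by
  set F : ℝ → ℝ := fun y => L2 y + L2 (1 - y) + Real.log y * Real.log (1 - y) with hFdef
  have hderiv : ∀ y ∈ Ioo (0:ℝ) 1, HasDerivAt F 0 y := by
    intro y hy
    obtain ⟨hy0, hy1⟩ := hy
    have hya : |y| < 1 := abs_lt.2 ⟨by linarith, hy1⟩
    have hya' : |1 - y| < 1 := abs_lt.2 ⟨by linarith, by linarith⟩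
    have h1y : (0:ℝ) < 1 - y := by linarith
    have h1 : HasDerivAt L2 (-Real.log (1 - y) / y) y := hasDerivAt_L2' hya (ne_of_gt hy0)
    have h2 : HasDerivAt (fun z : ℝ => L2 (1 - z)) (Real.log y / (1 - y)) y := by
      have inner : HasDerivAt (fun z : ℝ => 1 - z) (-1) y := by
        simpa using (hasDerivAt_id y).const_sub 1
      have outer := hasDerivAt_L2' hya' (ne_of_gt h1y)
      have hc := outer.comp y inner
      have : -Real.log (1 - (1 - y)) / (1 - y) * -1 = Real.log y / (1 - y) := by
        rw [show (1:ℝ) - (1 - y) = y by ring]; ring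
      rw [this] at hc
      simpa [Function.comp_def] using hc
    have h3 : HasDerivAt (fun z : ℝ => Real.log z * Real.log (1 - z))
        (Real.log (1 - y) / y - Real.log y / (1 - y)) y := by
      have ha := Real.hasDerivAt_log (ne_of_gt hy0)
      have hb : HasDerivAt (fun z : ℝ => Real.log (1 - z)) (-(1 - y)⁻¹) y := by
        have inner : HasDerivAt (fun z : ℝ => 1 - z) (-1) y := by
          simpa using (hasDerivAt_id y).const_sub 1
        have outer := Real.hasDerivAt_log (ne_of_gt h1y)
        have hc := outer.comp y inner
        have : (1 - y)⁻¹ * -1 = -(1 - y)⁻¹ := by ring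
        rw [this] at hc
        simpa [Function.comp_def] using hc
      have := ha.mul hb
      refine this.congr_deriv (Eq.symm ?_)
      field_simp
      ring
    have := (h1.add h2).add h3
    refine this.congr_deriv (Eq.symm ?_)
    have hyne : y ≠ 0 := ne_of_gt hy0
    have h1yne : (1:ℝ) - y ≠ 0 := ne_of_gt h1y
    field_simp
    ring
  have hconst : ∀ y ∈ Ioo (0:ℝ) 1, F y = F x := fun y hy => const_on_Ioo hderiv hy hx
  have htend : Tendsto F (𝓝[<] (1:ℝ)) (𝓝 (π ^ 2 / 6)) := by
    have hmem : ∀ᶠ z in (𝓝[<] (1:ℝ)), z ∈ Ioo (0:ℝ) 1 := Ioo_mem_left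
    have hid : Tendsto (fun z : ℝ => z) (𝓝[<] (1:ℝ)) (𝓝 (1:ℝ)) :=
      Filter.tendsto_id.mono_left nhdsWithin_le_nhds
    have hsub : Tendsto (fun z : ℝ => 1 - z) (𝓝[<] (1:ℝ)) (𝓝 (0:ℝ)) := by
      have := ((continuous_sub_left (1:ℝ)).tendsto 1)
      simpa using this.mono_left nhdsWithin_le_nhds
    have t1 : Tendsto (fun z : ℝ => L2 z) (𝓝[<] (1:ℝ)) (𝓝 (L2 1)) := by
      apply tendsto_L2 (by norm_num) hid
      filter_upwards [hmem] with z hz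
      exact ⟨by linarith [hz.1], hz.2.le⟩
    have t2 : Tendsto (fun z : ℝ => L2 (1 - z)) (𝓝[<] (1:ℝ)) (𝓝 (L2 0)) := by
      apply tendsto_L2 (by norm_num) hsub
      filter_upwards [hmem] with z hz
      constructor <;> [linarith [hz.2]; linarith [hz.1]]
    have := (t1.add t2).add tendsto_loglog
    rw [L2_one, L2_zero] at this
    simpa using this
  have htend' : Tendsto F (𝓝[<] (1:ℝ)) (𝓝 (F x)) := by
    apply Tendsto.congr' ?_ tendsto_const_nhds
    filter_upwards [Ioo_mem_left] with z hz
    exact (hconst z hz).symm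
  exact tendsto_nhds_unique htend' htend


lemma hasDerivAt_inner_inv {y : ℝ} (hy0 : (0:ℝ) < y) :
    HasDerivAt (fun z : ℝ => 1 - z⁻¹) ((y ^ 2)⁻¹) y := by
  have := (hasDerivAt_inv (ne_of_gt hy0)).const_sub 1
  simpa using this

lemma mem_prop_half {y : ℝ} (hy : y ∈ Ioo (1/2:ℝ) 1) :
    0 < y ∧ y < 1 ∧ (0:ℝ) < 1 - y ∧ -1 < 1 - y⁻¹ ∧ 1 - y⁻¹ < 0 := by
  obtain ⟨h1, h2⟩ := hy
  have hy0 : (0:ℝ) < y := by linarith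
  have ha : y⁻¹ < 2 := by
    rw [inv_lt_iff_one_lt_mul₀ hy0]; linarith
  have hb : 1 < y⁻¹ := (one_lt_inv₀ hy0).2 h2
  exact ⟨hy0, h2, by linarith, by linarith, by linarith⟩


lemma hasDerivAt_L2_comp_inv {y : ℝ} (hy : y ∈ Ioo (1/2:ℝ) 1) :
    HasDerivAt (fun z : ℝ => L2 (1 - z⁻¹)) (Real.log y / (1 - y⁻¹) * (y ^ 2)⁻¹) y := by
  obtain ⟨hy0, hy1, h1y, hm1, hm0⟩ := mem_prop_half hy
  have hya : |1 - y⁻¹| < 1 := abs_lt.2 ⟨hm1, by linarith⟩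
  have outer := hasDerivAt_L2' hya (ne_of_lt hm0)
  have hc := outer.comp y (hasDerivAt_inner_inv hy0)
  have key : -Real.log (1 - (1 - y⁻¹)) / (1 - y⁻¹) = Real.log y / (1 - y⁻¹) := by
    rw [show (1:ℝ) - (1 - y⁻¹) = y⁻¹ by ring, Real.log_inv]
    ring
  rw [key] at hc
  simpa [Function.comp_def] using hc

lemma hasDerivAt_L2_comp_sub {y : ℝ} (hy0 : 0 < y) (hy1 : y < 1) :
    HasDerivAt (fun z : ℝ => L2 (1 - z)) (Real.log y / (1 - y)) y := by
  have hya' : |1 - y| < 1 := abs_lt.2 ⟨by linarith, by linarith⟩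
  have inner : HasDerivAt (fun z : ℝ => 1 - z) (-1) y := by
    simpa using (hasDerivAt_id y).const_sub 1
  have outer := hasDerivAt_L2' hya' (ne_of_gt (by linarith : (0:ℝ) < 1 - y))
  have hc := outer.comp y inner
  have : -Real.log (1 - (1 - y)) / (1 - y) * -1 = Real.log y / (1 - y) := by
    rw [show (1:ℝ) - (1 - y) = y by ring]; ring
  rw [this] at hc
  simpa [Function.comp_def] using hc

lemma landen2 {x : ℝ} (hx : x ∈ Ioo (1/2:ℝ) 1) :
    L2 (1 - x⁻¹) + L2 (1 - x) + (1/2) * Real.log x ^ 2 = 0 := by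
  set F : ℝ → ℝ := fun y => L2 (1 - y⁻¹) + L2 (1 - y) + (1/2) * Real.log y ^ 2 with hFdef
  have hderiv : ∀ y ∈ Ioo (1/2:ℝ) 1, HasDerivAt F 0 y := by
    intro y hy
    obtain ⟨hy0, hy1, h1y, hm1, hm0⟩ := mem_prop_half hy
    have h1 := hasDerivAt_L2_comp_inv hy
    have h2 := hasDerivAt_L2_comp_sub hy0 hy1
    have h3 : HasDerivAt (fun z : ℝ => (1/2) * Real.log z ^ 2) (Real.log y * y⁻¹) y := by
      have := ((Real.hasDerivAt_log (ne_of_gt hy0)).pow 2).const_mul (1/2 : ℝ)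
      refine this.congr_deriv (Eq.symm ?_)
      push_cast
      ring
    have := (h1.add h2).add h3
    refine this.congr_deriv (Eq.symm ?_)
    have hyne : y ≠ 0 := ne_of_gt hy0
    have h1yne : (1:ℝ) - y ≠ 0 := ne_of_gt h1y
    have hmne : (1:ℝ) - y⁻¹ ≠ 0 := ne_of_lt hm0
    have hym1 : y - 1 ≠ 0 := by intro h; rw [sub_eq_zero] at h; rw [h] at hy1; exact lt_irrefl 1 hy1
    have e1 : (1:ℝ) - y⁻¹ = (y - 1)/y := by field_simp
    rw [e1]
    field_simp
    ring
  have hconst : ∀ y ∈ Ioo (1/2:ℝ) 1, F y = F x := fun y hy => const_on_Ioo hderiv hy hx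
  have htend : Tendsto F (𝓝[<] (1:ℝ)) (𝓝 0) := by
    have hmem : ∀ᶠ z in (𝓝[<] (1:ℝ)), z ∈ Ioo (1/2:ℝ) 1 := Ioo_half_mem_left
    have hsub : Tendsto (fun z : ℝ => 1 - z) (𝓝[<] (1:ℝ)) (𝓝 (0:ℝ)) := by
      have := ((continuous_sub_left (1:ℝ)).tendsto 1)
      simpa using this.mono_left nhdsWithin_le_nhds
    have hinvt : Tendsto (fun z : ℝ => 1 - z⁻¹) (𝓝[<] (1:ℝ)) (𝓝 (0:ℝ)) := by
      have hc : ContinuousAt (fun z : ℝ => 1 - z⁻¹) 1 := by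
        have : ContinuousAt (fun z : ℝ => z⁻¹) 1 := continuousAt_inv₀ one_ne_zero
        exact continuousAt_const.sub this
      have := hc.tendsto
      norm_num at this
      exact this.mono_left nhdsWithin_le_nhds
    have t1 : Tendsto (fun z : ℝ => L2 (1 - z⁻¹)) (𝓝[<] (1:ℝ)) (𝓝 (L2 0)) := by
      apply tendsto_L2 (by norm_num) hinvt
      filter_upwards [hmem] with z hz
      obtain ⟨_, _, _, hm1, hm0⟩ := mem_prop_half hz
      exact ⟨hm1.le, by linarith⟩
    have t2 : Tendsto (fun z : ℝ => L2 (1 - z)) (𝓝[<] (1:ℝ)) (𝓝 (L2 0)) := by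
      apply tendsto_L2 (by norm_num) hsub
      filter_upwards [hmem] with z hz
      constructor <;> [linarith [hz.2]; linarith [hz.1]]
    have t3 : Tendsto (fun z : ℝ => (1/2) * Real.log z ^ 2) (𝓝[<] (1:ℝ)) (𝓝 0) := by
      have hc : ContinuousAt (fun z : ℝ => (1/2) * Real.log z ^ 2) 1 := by
        have := (Real.continuousAt_log one_ne_zero)
        exact (continuousAt_const.mul (this.pow 2))
      have := hc.tendsto
      norm_num at this
      exact this.mono_left nhdsWithin_le_nhds
    have h := (t1.add t2).add t3
    rw [L2_zero] at h
    have hz0 : (0:ℝ) + 0 + 0 = 0 := by norm_num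
    rw [hz0] at h
    exact h
  have htend' : Tendsto F (𝓝[<] (1:ℝ)) (𝓝 (F x)) := by
    apply Tendsto.congr' ?_ tendsto_const_nhds
    filter_upwards [Ioo_half_mem_left] with z hz
    exact (hconst z hz).symm
  exact tendsto_nhds_unique htend' htend


lemma hasDerivAt_log_one_sub {y : ℝ} (h1y : (0:ℝ) < 1 - y) :
    HasDerivAt (fun z : ℝ => Real.log (1 - z)) (-(1 - y)⁻¹) y := by
  have inner : HasDerivAt (fun z : ℝ => 1 - z) (-1) y := by
    simpa using (hasDerivAt_id y).const_sub 1
  have outer := Real.hasDerivAt_log (ne_of_gt h1y)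
  have hc := outer.comp y inner
  have : (1 - y)⁻¹ * -1 = -(1 - y)⁻¹ := by ring
  rw [this] at hc
  simpa [Function.comp_def] using hc

lemma hasDerivAt_L3_comp_sub {y : ℝ} (hy0 : 0 < y) (hy1 : y < 1) :
    HasDerivAt (fun z : ℝ => L3 (1 - z)) (-(L2 (1 - y) / (1 - y))) y := by
  have hya' : |1 - y| < 1 := abs_lt.2 ⟨by linarith, by linarith⟩
  have inner : HasDerivAt (fun z : ℝ => 1 - z) (-1) y := by
    simpa using (hasDerivAt_id y).const_sub 1
  have outer := hasDerivAt_L3' hya' (ne_of_gt (by linarith : (0:ℝ) < 1 - y))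
  have hc := outer.comp y inner
  have : L2 (1 - y) / (1 - y) * -1 = -(L2 (1 - y) / (1 - y)) := by ring
  rw [this] at hc
  simpa [Function.comp_def] using hc

lemma hasDerivAt_L3_comp_inv {y : ℝ} (hy : y ∈ Ioo (1/2:ℝ) 1) :
    HasDerivAt (fun z : ℝ => L3 (1 - z⁻¹)) (L2 (1 - y⁻¹) / (1 - y⁻¹) * (y ^ 2)⁻¹) y := by
  obtain ⟨hy0, hy1, h1y, hm1, hm0⟩ := mem_prop_half hy
  have hya : |1 - y⁻¹| < 1 := abs_lt.2 ⟨hm1, by linarith⟩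
  have outer := hasDerivAt_L3' hya (ne_of_lt hm0)
  have hc := outer.comp y (hasDerivAt_inner_inv hy0)
  simpa [Function.comp_def] using hc

lemma trilog {x : ℝ} (hx : x ∈ Ioo (1/2:ℝ) 1) :
    L3 x + L3 (1 - x) + L3 (1 - x⁻¹)
      = L3 1 + Real.log x ^ 3 / 6 + (π ^ 2 / 6) * Real.log x
        - (1/2) * Real.log x ^ 2 * Real.log (1 - x) := by
  set T : ℝ → ℝ := fun y => L3 y + L3 (1 - y) + L3 (1 - y⁻¹)
      - (Real.log y ^ 3 / 6 + (π ^ 2 / 6) * Real.log y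
        - (1/2) * Real.log y ^ 2 * Real.log (1 - y)) with hTdef
  have hderiv : ∀ y ∈ Ioo (1/2:ℝ) 1, HasDerivAt T 0 y := by
    intro y hy
    obtain ⟨hy0, hy1, h1y, hm1, hm0⟩ := mem_prop_half hy
    have hya : |y| < 1 := abs_lt.2 ⟨by linarith, hy1⟩
    have hA : HasDerivAt L3 (L2 y / y) y := hasDerivAt_L3' hya (ne_of_gt hy0)
    have hB := hasDerivAt_L3_comp_sub hy0 hy1
    have hC := hasDerivAt_L3_comp_inv hy
    have hD : HasDerivAt (fun z : ℝ => Real.log z ^ 3 / 6)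
        (Real.log y ^ 2 * y⁻¹ / 2) y := by
      have := ((Real.hasDerivAt_log (ne_of_gt hy0)).pow 3).div_const 6
      refine this.congr_deriv (Eq.symm ?_)
      push_cast
      ring
    have hE : HasDerivAt (fun z : ℝ => (π ^ 2 / 6) * Real.log z) ((π ^ 2 / 6) * y⁻¹) y :=
      (Real.hasDerivAt_log (ne_of_gt hy0)).const_mul _
    have hF : HasDerivAt (fun z : ℝ => (1/2) * Real.log z ^ 2 * Real.log (1 - z))
        ((Real.log y * y⁻¹) * Real.log (1 - y) + ((1/2) * Real.log y ^ 2) * (-(1 - y)⁻¹)) y := by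
      have ha : HasDerivAt (fun z : ℝ => (1/2) * Real.log z ^ 2) (Real.log y * y⁻¹) y := by
        have := ((Real.hasDerivAt_log (ne_of_gt hy0)).pow 2).const_mul (1/2 : ℝ)
        refine this.congr_deriv (Eq.symm ?_)
        push_cast
        ring
      exact ha.mul (hasDerivAt_log_one_sub h1y)
    have hall := ((hA.add hB).add hC).sub ((hD.add hE).sub hF)
    refine hall.congr_deriv (Eq.symm ?_)
    have hE2 : L2 (1 - y) = π ^ 2 / 6 - L2 y - Real.log y * Real.log (1 - y) := by
      have := euler (⟨hy0, hy1⟩ : y ∈ Ioo (0:ℝ) 1); linarith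
    have hL2i : L2 (1 - y⁻¹) = L2 y + Real.log y * Real.log (1 - y)
        - π ^ 2 / 6 - (1/2) * Real.log y ^ 2 := by
      have := landen2 hy; linarith
    have hyne : y ≠ 0 := ne_of_gt hy0
    have h1yne : (1:ℝ) - y ≠ 0 := ne_of_gt h1y
    have hym1 : y - 1 ≠ 0 := by intro h; rw [sub_eq_zero] at h; rw [h] at hy1; exact lt_irrefl 1 hy1
    have e1 : (1:ℝ) - y⁻¹ = (y - 1)/y := by field_simp
    rw [hE2, hL2i, e1]
    field_simp
    ring
  have hconst : ∀ y ∈ Ioo (1/2:ℝ) 1, T y = T x := fun y hy => const_on_Ioo hderiv hy hx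
  have htend : Tendsto T (𝓝[<] (1:ℝ)) (𝓝 (L3 1)) := by
    have hmem : ∀ᶠ z in (𝓝[<] (1:ℝ)), z ∈ Ioo (1/2:ℝ) 1 := Ioo_half_mem_left
    have hid : Tendsto (fun z : ℝ => z) (𝓝[<] (1:ℝ)) (𝓝 (1:ℝ)) :=
      Filter.tendsto_id.mono_left nhdsWithin_le_nhds
    have hsub : Tendsto (fun z : ℝ => 1 - z) (𝓝[<] (1:ℝ)) (𝓝 (0:ℝ)) := by
      have := ((continuous_sub_left (1:ℝ)).tendsto 1)
      simpa using this.mono_left nhdsWithin_le_nhds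
    have hinvt : Tendsto (fun z : ℝ => 1 - z⁻¹) (𝓝[<] (1:ℝ)) (𝓝 (0:ℝ)) := by
      have hc : ContinuousAt (fun z : ℝ => 1 - z⁻¹) 1 := by
        have : ContinuousAt (fun z : ℝ => z⁻¹) 1 := continuousAt_inv₀ one_ne_zero
        exact continuousAt_const.sub this
      have := hc.tendsto
      norm_num at this
      exact this.mono_left nhdsWithin_le_nhds
    have hlog : Tendsto (fun z : ℝ => Real.log z) (𝓝[<] (1:ℝ)) (𝓝 (0:ℝ)) := by
      have := (Real.continuousAt_log one_ne_zero).tendsto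
      rw [Real.log_one] at this
      exact this.mono_left nhdsWithin_le_nhds
    have tA : Tendsto (fun z : ℝ => L3 z) (𝓝[<] (1:ℝ)) (𝓝 (L3 1)) := by
      apply tendsto_L3 (by norm_num) hid
      filter_upwards [hmem] with z hz
      exact ⟨by linarith [hz.1], hz.2.le⟩
    have tB : Tendsto (fun z : ℝ => L3 (1 - z)) (𝓝[<] (1:ℝ)) (𝓝 (L3 0)) := by
      apply tendsto_L3 (by norm_num) hsub
      filter_upwards [hmem] with z hz
      constructor <;> [linarith [hz.2]; linarith [hz.1]]
    have tC : Tendsto (fun z : ℝ => L3 (1 - z⁻¹)) (𝓝[<] (1:ℝ)) (𝓝 (L3 0)) := by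
      apply tendsto_L3 (by norm_num) hinvt
      filter_upwards [hmem] with z hz
      obtain ⟨_, _, _, hm1, hm0⟩ := mem_prop_half hz
      exact ⟨hm1.le, by linarith⟩
    have tD : Tendsto (fun z : ℝ => Real.log z ^ 3 / 6) (𝓝[<] (1:ℝ)) (𝓝 (0:ℝ)) := by
      have := ((hlog.pow 3).div_const 6)
      simpa using this
    have tE : Tendsto (fun z : ℝ => (π ^ 2 / 6) * Real.log z) (𝓝[<] (1:ℝ)) (𝓝 (0:ℝ)) := by
      have := hlog.const_mul (π ^ 2 / 6)
      simpa using this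
    have tF : Tendsto (fun z : ℝ => (1/2) * Real.log z ^ 2 * Real.log (1 - z))
        (𝓝[<] (1:ℝ)) (𝓝 (0:ℝ)) := by
      have h1 : Tendsto (fun z : ℝ => ((1/2) * Real.log z) * (Real.log z * Real.log (1 - z)))
          (𝓝[<] (1:ℝ)) (𝓝 (0:ℝ)) := by
        have := (hlog.const_mul (1/2 : ℝ)).mul tendsto_loglog
        simpa using this
      apply h1.congr
      intro z
      ring
    have h := (tA.add tB).add tC |>.sub ((tD.add tE).sub tF)
    rw [L3_zero] at h
    have hz0 : (L3 1 + 0 + 0 : ℝ) - (0 + 0 - 0) = L3 1 := by ring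
    rw [hz0] at h
    exact h
  have htend' : Tendsto T (𝓝[<] (1:ℝ)) (𝓝 (T x)) := by
    apply Tendsto.congr' ?_ tendsto_const_nhds
    filter_upwards [Ioo_half_mem_left] with z hz
    exact (hconst z hz).symm
  have := tendsto_nhds_unique htend' htend
  rw [hTdef] at this
  simp only at this
  linarith


lemma L3_one_eq : L3 1 = ∑' n : ℕ, 1 / ((n : ℝ) + 1) ^ 3 := by
  unfold L3; congr 1; funext n; rw [one_pow]

lemma L3_neg_one : L3 (-1) = -(3/4) * L3 1 := by
  set a : ℕ → ℝ := fun n => 1 / ((n : ℝ) + 1) ^ 3 with ha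
  set f : ℕ → ℝ := fun n => (-1 : ℝ) ^ (n + 1) / ((n : ℝ) + 1) ^ 3 with hf
  have hsa : Summable a := summable_invcube
  have hsf : Summable f := by
    refine Summable.of_norm_bounded hsa (fun n => le_of_eq ?_)
    rw [hf, ha]
    simp only [norm_div, norm_pow, norm_neg, norm_one, one_pow, Real.norm_eq_abs,
      abs_of_pos (show (0:ℝ) < (n:ℝ) + 1 by positivity)]
  have hinj2 : Function.Injective (fun k : ℕ => 2 * k) := fun a b h => by
    dsimp only at h; omega
  have hinj2' : Function.Injective (fun k : ℕ => 2 * k + 1) := fun a b h => by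
    dsimp only at h; omega
  have hae : Summable (fun k => a (2 * k)) := hsa.comp_injective hinj2
  have hao : Summable (fun k => a (2 * k + 1)) := hsa.comp_injective hinj2'
  have hfe : Summable (fun k => f (2 * k)) := hsf.comp_injective hinj2
  have hfo : Summable (fun k => f (2 * k + 1)) := hsf.comp_injective hinj2'
  have hA := tsum_even_add_odd hae hao
  have hF := tsum_even_add_odd hfe hfo
  have hfe' : ∀ k : ℕ, f (2 * k) = -(a (2 * k)) := by
    intro k
    rw [hf, ha]
    simp only
    rw [Odd.neg_one_pow ⟨k, by ring⟩]
    ring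
  have hfo' : ∀ k : ℕ, f (2 * k + 1) = a (2 * k + 1) := by
    intro k
    rw [hf, ha]
    simp only
    rw [Even.neg_one_pow ⟨k + 1, by ring⟩]
  have hodd : ∀ k : ℕ, a (2 * k + 1) = (1/8) * a k := by
    intro k
    rw [ha]
    simp only
    push_cast
    rw [show ((2:ℝ) * (k:ℝ) + 1 + 1) = 2 * ((k:ℝ) + 1) by ring, mul_pow]
    norm_num
    ring
  have hOsum : ∑' k, a (2 * k + 1) = (1/8) * ∑' k, a k := by
    rw [tsum_congr hodd, tsum_mul_left]
  have hEsum : ∑' k, a (2 * k) = (7/8) * ∑' k, a k := by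
    have := hA
    rw [hOsum] at this
    linarith
  have hL31 : L3 1 = ∑' k, a k := L3_one_eq
  have hL3m : L3 (-1) = ∑' k, f k := by
    unfold L3; rw [hf]
  rw [hL3m, ← hF, tsum_congr hfe', tsum_congr hfo', tsum_neg, hOsum, hEsum, hL31]
  ring

lemma L3_half : L3 (1/2) = (7/8) * L3 1 - (π ^ 2 / 12) * Real.log 2 + (1/6) * Real.log 2 ^ 3 := by
  have hmem : Ioo (1/2:ℝ) 1 ∈ 𝓝[>] (1/2:ℝ) :=
    Ioo_mem_nhdsGT_of_mem ⟨le_refl _, by norm_num⟩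
  set lhs : ℝ → ℝ := fun z => L3 z + L3 (1 - z) + L3 (1 - z⁻¹) with hlhs
  set rhs : ℝ → ℝ := fun z => L3 1 + Real.log z ^ 3 / 6 + (π ^ 2 / 6) * Real.log z
      - (1/2) * Real.log z ^ 2 * Real.log (1 - z) with hrhs
  have heq : ∀ᶠ z in 𝓝[>] (1/2:ℝ), lhs z = rhs z := by
    filter_upwards [hmem] with z hz
    exact trilog hz
  have hid : Tendsto (fun z : ℝ => z) (𝓝[>] (1/2:ℝ)) (𝓝 (1/2:ℝ)) :=
    Filter.tendsto_id.mono_left nhdsWithin_le_nhds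
  have hsub : Tendsto (fun z : ℝ => 1 - z) (𝓝[>] (1/2:ℝ)) (𝓝 (1/2:ℝ)) := by
    have := ((continuous_sub_left (1:ℝ)).tendsto (1/2:ℝ))
    norm_num at this
    exact this.mono_left nhdsWithin_le_nhds
  have hinvt : Tendsto (fun z : ℝ => 1 - z⁻¹) (𝓝[>] (1/2:ℝ)) (𝓝 (-1:ℝ)) := by
    have hc : ContinuousAt (fun z : ℝ => 1 - z⁻¹) (1/2) := by
      have : ContinuousAt (fun z : ℝ => z⁻¹) (1/2) := continuousAt_inv₀ (by norm_num)
      exact continuousAt_const.sub this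
    have := hc.tendsto
    norm_num at this
    exact this.mono_left nhdsWithin_le_nhds
  have tA : Tendsto (fun z : ℝ => L3 z) (𝓝[>] (1/2:ℝ)) (𝓝 (L3 (1/2))) := by
    apply tendsto_L3 (by norm_num) hid
    filter_upwards [hmem] with z hz
    constructor <;> [linarith [hz.1]; linarith [hz.2]]
  have tB : Tendsto (fun z : ℝ => L3 (1 - z)) (𝓝[>] (1/2:ℝ)) (𝓝 (L3 (1/2))) := by
    apply tendsto_L3 (by norm_num) hsub
    filter_upwards [hmem] with z hz
    constructor <;> [linarith [hz.2]; linarith [hz.1]]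
  have tC : Tendsto (fun z : ℝ => L3 (1 - z⁻¹)) (𝓝[>] (1/2:ℝ)) (𝓝 (L3 (-1))) := by
    apply tendsto_L3 (by norm_num) hinvt
    filter_upwards [hmem] with z hz
    obtain ⟨_, _, _, hm1, hm0⟩ := mem_prop_half hz
    exact ⟨hm1.le, by linarith⟩
  have hlog : Tendsto (fun z : ℝ => Real.log z) (𝓝[>] (1/2:ℝ)) (𝓝 (Real.log (1/2))) := by
    have := (Real.continuousAt_log (by norm_num : (1/2:ℝ) ≠ 0)).tendsto
    exact this.mono_left nhdsWithin_le_nhds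
  have hlog1 : Tendsto (fun z : ℝ => Real.log (1 - z)) (𝓝[>] (1/2:ℝ)) (𝓝 (Real.log (1/2))) := by
    have h1 : ContinuousAt (fun z : ℝ => 1 - z) (1/2 : ℝ) :=
      continuousAt_const.sub continuousAt_id
    have h2 : ContinuousAt Real.log ((fun z : ℝ => 1 - z) (1/2)) := by
      simp only
      exact Real.continuousAt_log (by norm_num)
    have hc := (h2.comp h1).tendsto
    norm_num at hc
    exact hc.mono_left nhdsWithin_le_nhds
  have tL : Tendsto lhs (𝓝[>] (1/2:ℝ)) (𝓝 (L3 (1/2) + L3 (1/2) + L3 (-1))) :=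
    (tA.add tB).add tC
  have tR : Tendsto rhs (𝓝[>] (1/2:ℝ))
      (𝓝 (L3 1 + Real.log (1/2) ^ 3 / 6 + (π ^ 2 / 6) * Real.log (1/2)
        - (1/2) * Real.log (1/2) ^ 2 * Real.log (1/2))) := by
    exact ((tendsto_const_nhds.add ((hlog.pow 3).div_const 6)).add
      (hlog.const_mul _)).sub (((hlog.pow 2).const_mul _).mul hlog1)
  have tL' : Tendsto lhs (𝓝[>] (1/2:ℝ))
      (𝓝 (L3 1 + Real.log (1/2) ^ 3 / 6 + (π ^ 2 / 6) * Real.log (1/2)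
        - (1/2) * Real.log (1/2) ^ 2 * Real.log (1/2))) := by
    exact Tendsto.congr' (by filter_upwards [heq] with z hz; exact hz.symm) tR
  have key := tendsto_nhds_unique tL tL'
  rw [L3_neg_one] at key
  have hl2 : Real.log (1/2 : ℝ) = -Real.log 2 := by
    rw [one_div, Real.log_inv]
  rw [hl2] at key
  nlinarith [key]


/-- `Li₃(1/2) = (7/8) ζ(3) - (π²/12) log 2 + (1/6) (log 2)³`, where
`Li₃(1/2) = ∑_{k ≥ 1} 2^{-k}/k³` and `ζ(3) = ∑_{k ≥ 1} 1/k³`. -/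
theorem stmt17 :
    (∑' k : ℕ, 1 / (2 ^ (k + 1) * ((k : ℝ) + 1) ^ 3))
      = (7 / 8) * (∑' k : ℕ, 1 / ((k : ℝ) + 1) ^ 3)
        - (π ^ 2 / 12) * Real.log 2 + (1 / 6) * (Real.log 2) ^ 3 := by
  have h1 : (∑' k : ℕ, 1 / (2 ^ (k + 1) * ((k : ℝ) + 1) ^ 3)) = L3 (1/2) := by
    unfold L3
    congr 1; funext k
    rw [div_pow, one_pow, div_div]
  rw [h1, L3_half, ← L3_one_eq]
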